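/- Let V : λX0 + αX1 + (λ+1)X2 + βX3 = 0 and W : λ'X0 + α'X1 + (λ'+1)X2 + β'X3 = 0 be planes of PG(3,q) in standard form with λ, λ' ∈ F*, λ ≠ λ', such that the conics K ∩ V and K ∩ W are disjoint, and let C1 and C2 be the projections from p = (1,0,1,0) of K ∩ V and K ∩ W onto the plane X0 = 0 (so C1 : α²X1² + X1X3 + β²X3² + λ²X2² = 0 and C2 : α'²X1² + X1X3 + β'²X3² + λ'²X2² = 0). Then the plane S : (λ+λ')X0 + (α+α')X1 + (λ+λ')X2 + (β+β')X3 = 0 obtained by summing the equations of V and W contains p; its intersection with the plane X0 = 0 is the line ℓ : (α+α')X1 + (λ+λ')X2 + (β+β')X3 = 0, whose point set equals the zero set of the singular conic C1 + C2 : (α²+α'²)X1² + (λ²+λ'²)X2² + (β²+β'²)X3² = 0 of the pencil spanned by C1 and C2; and ℓ contains no point of the degree-4 maximal arc of Denniston type determined by V and W (ℓ is its line at infinity). -/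

import Mathlib

/-!
STATEMENT 11: The singular plane (Lemma 6 of the paper).  For conic planes
`V : λX0 + αX1 + (λ+1)X2 + βX3 = 0` and `W : λ'X0 + α'X1 + (λ'+1)X2 + β'X3 = 0`
in standard form (`λ ≠ λ'` nonzero) cutting disjoint conics on `K`, with
projections `C1 : α²X1² + X1X3 + β²X3² + λ²X2² = 0` and
`C2 : α'²X1² + X1X3 + β'²X3² + λ'²X2² = 0` from `p = (1,0,1,0)` onto `X0 = 0`,
the sum plane `S : (λ+λ')X0 + (α+α')X1 + (λ+λ')X2 + (β+β')X3 = 0` contains `p`;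
`S ∩ {X0 = 0}` is the line `ℓ : (α+α')X1 + (λ+λ')X2 + (β+β')X3 = 0`, whose
point set is the zero set of the singular conic
`(α²+α'²)X1² + (λ²+λ'²)X2² + (β²+β'²)X3² = 0` of the pencil spanned by `C1`
and `C2`; and `ℓ` misses the degree-4 Denniston arc determined by `V` and `W`.
-/

open Projectivization

noncomputable section

abbrev F (h : ℕ) : Type := GaloisField 2 h

/-- Points of the projective space `PG(3, 2^h)`. -/
abbrev Pt3 (h : ℕ) := Projectivization (F h) (Fin 4 → F h)

/-- The quadratic cone `K : X1X3 = X2²` with vertex `(1,0,0,0)`. -/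
def cone {h : ℕ} : Set (Pt3 h) :=
  {P | P.rep 1 * P.rep 3 = P.rep 2 ^ 2}

/-- The plane `aX0 + bX1 + cX2 + dX3 = 0` of `PG(3,q)`. -/
def planeSet {h : ℕ} (a b c d : F h) : Set (Pt3 h) :=
  {P | a * P.rep 0 + b * P.rep 1 + c * P.rep 2 + d * P.rep 3 = 0}

/-- The point `p = (1,0,1,0)` of the nuclear line of the cone. -/
def pPoint {h : ℕ} : Pt3 h :=
  Projectivization.mk (F h) ![1, 0, 1, 0] (by
    intro hcon; simpa using congrFun hcon 0)

/-- The point `n = (0,0,1,0)`, the common nucleus in the plane `X0 = 0`. -/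
def nucleus4 {h : ℕ} : Pt3 h :=
  Projectivization.mk (F h) ![0, 0, 1, 0] (by
    intro hcon; simpa using congrFun hcon 2)

/-- The conic `{(0,x1,x2,x3) : α²x1² + x1x3 + β²x3² + λ²x2² = 0}` lying in the
plane `X0 = 0` of `PG(3,q)`. -/
def planeConic {h : ℕ} (α β lam : F h) : Set (Pt3 h) :=
  {P | P.rep 0 = 0 ∧
    α ^ 2 * P.rep 1 ^ 2 + P.rep 1 * P.rep 3 + β ^ 2 * P.rep 3 ^ 2 +
      lam ^ 2 * P.rep 2 ^ 2 = 0}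


lemma charTwo (h : ℕ) : (2 : F h) = 0 := CharTwo.two_eq_zero

lemma aux_mem {h : ℕ} (α β lam c0 x1 x2 x3 : F h)
    (hc : c0 = α * x1 + (lam + 1) * x2 + β * x3)
    (hE : α ^ 2 * x1 ^ 2 + x1 * x3 + β ^ 2 * x3 ^ 2 + lam ^ 2 * x2 ^ 2 = 0)
    (hv : (![c0, x1, x2 + c0, x3] : Fin 4 → F h) ≠ 0) :
    Projectivization.mk (F h) ![c0, x1, x2 + c0, x3] hv ∈
      cone ∩ planeSet lam α (lam + 1) β := by
  have htwo : (2 : F h) = 0 := charTwo h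
  obtain ⟨a, ha⟩ := Projectivization.exists_smul_eq_mk_rep (F h) _ hv
  have hrep : ∀ i, (Projectivization.mk (F h) ![c0, x1, x2 + c0, x3] hv).rep i
      = (a : F h) * (![c0, x1, x2 + c0, x3] : Fin 4 → F h) i := by
    intro i; rw [← ha]; simp [Units.smul_def]
  subst hc
  constructor
  · show _ * _ = _ ^ 2
    rw [hrep 1, hrep 2, hrep 3]
    simp only [Matrix.cons_val_one, Matrix.cons_val_two, Matrix.cons_val_three,
      Matrix.head_cons, Matrix.tail_cons, Matrix.cons_val_zero]
    linear_combination -(a : F h) ^ 2 * hE + ((a : F h) ^ 2 *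
      ((-2) * x2 ^ 2 + x1 * x3 + (-2) * lam * x2 ^ 2 + (-2) * β * x2 * x3
        + (-1) * β * lam * x2 * x3 + (-2) * α * x1 * x2 + (-1) * α * lam * x1 * x2
        + (-1) * α * β * x1 * x3)) * htwo
  · show _ * _ + _ * _ + _ * _ + _ * _ = 0
    rw [hrep 0, hrep 1, hrep 2, hrep 3]
    simp only [Matrix.cons_val_zero, Matrix.cons_val_one, Matrix.cons_val_two,
      Matrix.cons_val_three, Matrix.head_cons, Matrix.tail_cons]
    linear_combination ((a : F h) * (x2 + 2 * lam * x2 + lam ^ 2 * x2 + β * x3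
      + β * lam * x3 + α * x1 + α * lam * x1)) * htwo

set_option maxHeartbeats 2000000 in
theorem stmt11 (h : ℕ) (hh : h ≠ 0) (α β α' β' lam lam' : F h)
    (hlam : lam ≠ 0) (hlam' : lam' ≠ 0) (hll : lam ≠ lam')
    (hdisj : Disjoint (cone ∩ planeSet lam α (lam + 1) β)
      (cone ∩ planeSet lam' α' (lam' + 1) β')) :
    -- the sum plane `S` contains `p = (1,0,1,0)`
    pPoint ∈ planeSet (lam + lam') (α + α') (lam + lam') (β + β') ∧
    -- `S ∩ {X0 = 0}` is the line `ℓ`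
    planeSet (lam + lam') (α + α') (lam + lam') (β + β') ∩ planeSet 1 0 0 0 =
      {P : Pt3 h | P.rep 0 = 0 ∧
        (α + α') * P.rep 1 + (lam + lam') * P.rep 2 + (β + β') * P.rep 3 = 0} ∧
    -- the point set of `ℓ` is the zero set of the singular conic `C1 + C2`
    {P : Pt3 h | P.rep 0 = 0 ∧
        (α + α') * P.rep 1 + (lam + lam') * P.rep 2 + (β + β') * P.rep 3 = 0} =
      {P : Pt3 h | P.rep 0 = 0 ∧
        (α ^ 2 + α' ^ 2) * P.rep 1 ^ 2 + (lam ^ 2 + lam' ^ 2) * P.rep 2 ^ 2 +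
          (β ^ 2 + β' ^ 2) * P.rep 3 ^ 2 = 0} ∧
    -- `ℓ` contains no point of the Denniston arc determined by `V` and `W`
    Disjoint
      {P : Pt3 h | P.rep 0 = 0 ∧
        (α + α') * P.rep 1 + (lam + lam') * P.rep 2 + (β + β') * P.rep 3 = 0}
      (planeConic α β lam ∪ planeConic α' β' lam' ∪
        planeConic ((α * lam + α' * lam') / (lam + lam'))
          ((β * lam + β' * lam') / (lam + lam')) (lam + lam') ∪
        {nucleus4}) := by
  have htwo : (2 : F h) = 0 := charTwo h
  have hmu : lam + lam' ≠ 0 := by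
    intro e; exact hll (by linear_combination e - lam' * htwo)
  refine ⟨?_, ?_, ?_, ?_⟩
  · -- p ∈ S
    show (lam + lam') * pPoint.rep 0 + (α + α') * pPoint.rep 1
      + (lam + lam') * pPoint.rep 2 + (β + β') * pPoint.rep 3 = 0
    obtain ⟨a, ha⟩ := Projectivization.exists_smul_eq_mk_rep (F h)
      (![1, 0, 1, 0] : Fin 4 → F h) (by intro hcon; simpa using congrFun hcon 0)
    have hrep : ∀ i, (pPoint (h := h)).rep i
        = (a : F h) * (![1, 0, 1, 0] : Fin 4 → F h) i := by
      intro i; rw [pPoint, ← ha]; simp [Units.smul_def]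
    rw [hrep 0, hrep 1, hrep 2, hrep 3]
    simp only [Matrix.cons_val_zero, Matrix.cons_val_one, Matrix.cons_val_two,
      Matrix.cons_val_three, Matrix.head_cons, Matrix.tail_cons]
    linear_combination ((lam + lam') * (a : F h)) * htwo
  · -- S ∩ {X0 = 0} = ℓ
    ext P
    simp only [planeSet, Set.mem_inter_iff, Set.mem_setOf_eq]
    constructor
    · rintro ⟨h1, h2⟩
      have h0 : P.rep 0 = 0 := by linear_combination h2
      exact ⟨h0, by linear_combination h1 - (lam + lam') * h0⟩
    · rintro ⟨h0, h1⟩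
      exact ⟨by linear_combination h1 + (lam + lam') * h0,
        by linear_combination h0⟩
  · -- ℓ = singular conic
    ext P
    simp only [Set.mem_setOf_eq]
    constructor
    · rintro ⟨h0, hL⟩
      refine ⟨h0, ?_⟩
      linear_combination ((α + α') * P.rep 1 + (lam + lam') * P.rep 2
          + (β + β') * P.rep 3) * hL +
        ((-1) * lam * lam' * P.rep 2 ^ 2 + (-1) * β' * lam' * P.rep 2 * P.rep 3
          + (-1) * β' * lam * P.rep 2 * P.rep 3 + (-1) * α' * lam' * P.rep 1 * P.rep 2
          + (-1) * α' * lam * P.rep 1 * P.rep 2 + (-1) * α' * β' * P.rep 1 * P.rep 3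
          + (-1) * β * lam' * P.rep 2 * P.rep 3 + (-1) * β * lam * P.rep 2 * P.rep 3
          + (-1) * β * β' * P.rep 3 ^ 2 + (-1) * β * α' * P.rep 1 * P.rep 3
          + (-1) * α * lam' * P.rep 1 * P.rep 2 + (-1) * α * lam * P.rep 1 * P.rep 2
          + (-1) * α * β' * P.rep 1 * P.rep 3 + (-1) * α * α' * P.rep 1 ^ 2
          + (-1) * α * β * P.rep 1 * P.rep 3) * htwo
    · rintro ⟨h0, hC⟩
      refine ⟨h0, ?_⟩
      have hsq : ((α + α') * P.rep 1 + (lam + lam') * P.rep 2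
          + (β + β') * P.rep 3) ^ 2 = 0 := by
        linear_combination hC +
          (lam * lam' * P.rep 2 ^ 2 + β' * lam' * P.rep 2 * P.rep 3
            + β' * lam * P.rep 2 * P.rep 3 + α' * lam' * P.rep 1 * P.rep 2
            + α' * lam * P.rep 1 * P.rep 2 + α' * β' * P.rep 1 * P.rep 3
            + β * lam' * P.rep 2 * P.rep 3 + β * lam * P.rep 2 * P.rep 3
            + β * β' * P.rep 3 ^ 2 + β * α' * P.rep 1 * P.rep 3
            + α * lam' * P.rep 1 * P.rep 2 + α * lam * P.rep 1 * P.rep 2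
            + α * β' * P.rep 1 * P.rep 3 + α * α' * P.rep 1 ^ 2
            + α * β * P.rep 1 * P.rep 3) * htwo
      exact pow_eq_zero_iff (two_ne_zero) |>.mp hsq
  · -- disjointness from the arc
    rw [Set.disjoint_left]
    rintro P ⟨hx0, hL⟩ hmem
    have hE12 : (α ^ 2 * P.rep 1 ^ 2 + P.rep 1 * P.rep 3 + β ^ 2 * P.rep 3 ^ 2
          + lam ^ 2 * P.rep 2 ^ 2)
        + (α' ^ 2 * P.rep 1 ^ 2 + P.rep 1 * P.rep 3 + β' ^ 2 * P.rep 3 ^ 2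
          + lam' ^ 2 * P.rep 2 ^ 2) = 0 := by
      linear_combination ((α + α') * P.rep 1 + (lam + lam') * P.rep 2
          + (β + β') * P.rep 3) * hL +
        (P.rep 1 * P.rep 3 + (-1) * lam * lam' * P.rep 2 ^ 2
          + (-1) * β' * lam' * P.rep 2 * P.rep 3 + (-1) * β' * lam * P.rep 2 * P.rep 3
          + (-1) * α' * lam' * P.rep 1 * P.rep 2 + (-1) * α' * lam * P.rep 1 * P.rep 2
          + (-1) * α' * β' * P.rep 1 * P.rep 3 + (-1) * β * lam' * P.rep 2 * P.rep 3
          + (-1) * β * lam * P.rep 2 * P.rep 3 + (-1) * β * β' * P.rep 3 ^ 2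
          + (-1) * β * α' * P.rep 1 * P.rep 3 + (-1) * α * lam' * P.rep 1 * P.rep 2
          + (-1) * α * lam * P.rep 1 * P.rep 2 + (-1) * α * β' * P.rep 1 * P.rep 3
          + (-1) * α * α' * P.rep 1 ^ 2 + (-1) * α * β * P.rep 1 * P.rep 3) * htwo
    simp only [Set.mem_union, Set.mem_singleton_iff, planeConic,
      Set.mem_setOf_eq] at hmem
    -- reduce every case to `E1 = 0`
    have hE1 : α ^ 2 * P.rep 1 ^ 2 + P.rep 1 * P.rep 3 + β ^ 2 * P.rep 3 ^ 2
        + lam ^ 2 * P.rep 2 ^ 2 = 0 := by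
      rcases hmem with (((⟨-, h1⟩ | ⟨-, h2⟩) | ⟨-, h3⟩) | hnuc)
      · exact h1
      · linear_combination hE12 - h2
      · have h3' : (α * lam + α' * lam') ^ 2 * P.rep 1 ^ 2
            + (lam + lam') ^ 2 * (P.rep 1 * P.rep 3)
            + (β * lam + β' * lam') ^ 2 * P.rep 3 ^ 2
            + (lam + lam') ^ 4 * P.rep 2 ^ 2 = 0 := by
          field_simp at h3
          linear_combination h3
        have hk : (lam + lam') ^ 2 * (α ^ 2 * P.rep 1 ^ 2 + P.rep 1 * P.rep 3
            + β ^ 2 * P.rep 3 ^ 2 + lam ^ 2 * P.rep 2 ^ 2) = 0 := by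
          linear_combination h3' - lam' ^ 2 * hE12 +
            (lam' ^ 2 * (P.rep 1 * P.rep 3)
              + (-2) * lam * lam' ^ 3 * P.rep 2 ^ 2
              + (-2) * lam ^ 2 * lam' ^ 2 * P.rep 2 ^ 2
              + (-1) * lam ^ 3 * lam' * P.rep 2 ^ 2
              + (-1) * β * β' * lam * lam' * P.rep 3 ^ 2
              + β ^ 2 * lam' ^ 2 * P.rep 3 ^ 2 + β ^ 2 * lam * lam' * P.rep 3 ^ 2
              + (-1) * α * α' * lam * lam' * P.rep 1 ^ 2
              + α ^ 2 * lam' ^ 2 * P.rep 1 ^ 2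
              + α ^ 2 * lam * lam' * P.rep 1 ^ 2) * htwo
        exact (mul_eq_zero.mp hk).resolve_left (pow_ne_zero 2 hmu)
      · exfalso
        subst hnuc
        obtain ⟨a, ha⟩ := Projectivization.exists_smul_eq_mk_rep (F h)
          (![0, 0, 1, 0] : Fin 4 → F h) (by intro hcon; simpa using congrFun hcon 2)
        have hrep : ∀ i, (nucleus4 (h := h)).rep i
            = (a : F h) * (![0, 0, 1, 0] : Fin 4 → F h) i := by
          intro i; rw [nucleus4, ← ha]; simp [Units.smul_def]
        rw [hrep 1, hrep 2, hrep 3] at hL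
        simp only [Matrix.cons_val_one, Matrix.cons_val_two, Matrix.cons_val_three,
          Matrix.head_cons, Matrix.tail_cons, mul_zero, mul_one, Matrix.cons_val_zero] at hL
        exact mul_ne_zero hmu a.ne_zero (by linear_combination hL)
    have hE2 : α' ^ 2 * P.rep 1 ^ 2 + P.rep 1 * P.rep 3 + β' ^ 2 * P.rep 3 ^ 2
        + lam' ^ 2 * P.rep 2 ^ 2 = 0 := by linear_combination hE12 - hE1
    -- build the common point of the two cone conics
    have hv : (![α * P.rep 1 + (lam + 1) * P.rep 2 + β * P.rep 3, P.rep 1,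
        P.rep 2 + (α * P.rep 1 + (lam + 1) * P.rep 2 + β * P.rep 3), P.rep 3]
          : Fin 4 → F h) ≠ 0 := by
      intro hzero
      have h1 : P.rep 1 = 0 := by simpa using congrFun hzero 1
      have h3 : P.rep 3 = 0 := by simpa using congrFun hzero 3
      have hc : α * P.rep 1 + (lam + 1) * P.rep 2 + β * P.rep 3 = 0 := by
        simpa using congrFun hzero 0
      have h2' : P.rep 2 + (α * P.rep 1 + (lam + 1) * P.rep 2 + β * P.rep 3) = 0 := by
        simpa using congrFun hzero 2
      have h2 : P.rep 2 = 0 := by linear_combination h2' - hc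
      apply P.rep_nonzero
      funext i
      fin_cases i
      · exact hx0
      · exact h1
      · exact h2
      · exact h3
    have hQ1 := aux_mem α β lam _ (P.rep 1) (P.rep 2) (P.rep 3) rfl hE1 hv
    have hc' : α * P.rep 1 + (lam + 1) * P.rep 2 + β * P.rep 3
        = α' * P.rep 1 + (lam' + 1) * P.rep 2 + β' * P.rep 3 := by
      linear_combination hL - (α' * P.rep 1 + lam' * P.rep 2 + β' * P.rep 3) * htwo
    have hQ2 := aux_mem α' β' lam' _ (P.rep 1) (P.rep 2) (P.rep 3) hc' hE2 hv
    exact Set.disjoint_left.mp hdisj hQ1 hQ2
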